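/- Assume 0 < μ_1 (the focusing case) and let β̄ be the unique zero of g in (−∞, μ_1). Then g(β) < 0 for all β < β̄, f is strictly increasing on (−∞, β̄), and f maps (−∞, β̄) bijectively onto the interval (−1 + 2/(n−1), ∞). In particular, for every real λ > −1 + 2/(n−1) the equation f(β) = λ has exactly one solution β ∈ (−∞, β̄), and for λ ≤ −1 + 2/(n−1) it has none. -/

import Mathlib

open Set Finset Filter Topology

/-- Focusing case: `g < 0` on `(-∞, β̄)`, `f` is strictly increasing there and maps
`(-∞, β̄)` bijectively onto `(-1 + 2/(n-1), ∞)`; hence `f(β) = λ` has exactly one solution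
`β < β̄` when `λ > -1 + 2/(n-1)` and none when `λ ≤ -1 + 2/(n-1)`. -/
theorem focusing_f_bijective (n : ℕ) (hn : 2 ≤ n) (μ : Fin n → ℝ) (hμ : Monotone μ)
    (g : ℝ → ℝ)
    (hg : ∀ β : ℝ, (∀ j, β ≠ μ j) → g β = 1 + β * ∑ j, 1 / (μ j - β))
    (f : ℝ → ℝ)
    (hf : ∀ β : ℝ, g β ≠ 0 → f β = -1 - 2 / g β)
    (hfoc : 0 < μ ⟨0, by omega⟩)
    (βb : ℝ) (hβb : βb < μ ⟨0, by omega⟩) (hzero : g βb = 0)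
    (huniq : ∀ β' : ℝ, β' < μ ⟨0, by omega⟩ → g β' = 0 → β' = βb) :
    (∀ β : ℝ, β < βb → g β < 0) ∧
    StrictMonoOn f (Iio βb) ∧
    Set.BijOn f (Iio βb) (Ioi (-1 + 2 / ((n : ℝ) - 1))) ∧
    (∀ lam : ℝ, -1 + 2 / ((n : ℝ) - 1) < lam → ∃! β : ℝ, β < βb ∧ f β = lam) ∧
    (∀ lam : ℝ, lam ≤ -1 + 2 / ((n : ℝ) - 1) → ¬∃ β : ℝ, β < βb ∧ f β = lam) := by
  have hn1 : (1:ℝ) ≤ (n:ℝ) - 1 := by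
    have : (2:ℝ) ≤ (n:ℝ) := by exact_mod_cast hn
    linarith
  set μ0 : ℝ := μ ⟨0, by omega⟩ with hμ0def
  have hμ0le : ∀ j : Fin n, μ0 ≤ μ j := by
    intro j
    exact hμ (by simp [Fin.le_def])
  have hμpos : ∀ j : Fin n, 0 < μ j := fun j => lt_of_lt_of_le hfoc (hμ0le j)
  have hden : ∀ β : ℝ, β < μ0 → ∀ j, 0 < μ j - β := by
    intro β hβ j
    have := hμ0le j
    linarith
  set G : ℝ → ℝ := fun β => 1 + ∑ j, β / (μ j - β) with hGdef
  have hne : (Finset.univ : Finset (Fin n)).Nonempty := ⟨⟨0, by omega⟩, mem_univ _⟩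
  have hgG : ∀ β : ℝ, β < μ0 → g β = G β := by
    intro β hβ
    have hneq : ∀ j, β ≠ μ j := fun j => ne_of_lt (lt_of_lt_of_le hβ (hμ0le j))
    rw [hg β hneq, hGdef]
    simp [Finset.mul_sum, div_eq_mul_inv]
  have hmono : ∀ x y : ℝ, x < y → y < μ0 → G x < G y := by
    intro x y hxy hy
    have hx : x < μ0 := hxy.trans hy
    have hterm : ∀ j : Fin n, x / (μ j - x) < y / (μ j - y) := by
      intro j
      have hdx := hden x hx j
      have hdy := hden y hy j
      rw [div_lt_div_iff₀ hdx hdy]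
      nlinarith [hμpos j]
    have hsum := Finset.sum_lt_sum_of_nonempty hne (fun j _ => hterm j)
    simp only [hGdef]
    linarith
  have hlow : ∀ β : ℝ, β < μ0 → (1 : ℝ) - n < G β := by
    intro β hβ
    have hterm : ∀ j : Fin n, (-1 : ℝ) < β / (μ j - β) := by
      intro j
      have hd := hden β hβ j
      rw [lt_div_iff₀ hd]
      nlinarith [hμpos j]
    have hsum := Finset.sum_lt_sum_of_nonempty hne (fun j _ => hterm j)
    simp only [Finset.sum_const, card_univ, Fintype.card_fin, nsmul_eq_mul] at hsum
    simp only [hGdef]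
    push_cast at hsum ⊢
    linarith
  have hGβb : G βb = 0 := by rw [← hgG βb hβb]; exact hzero
  have hGneg : ∀ β : ℝ, β < βb → G β < 0 := by
    intro β hβ
    have := hmono β βb hβ hβb
    linarith
  have hgneg : ∀ β : ℝ, β < βb → g β < 0 := by
    intro β hβ
    rw [hgG β (hβ.trans hβb)]
    exact hGneg β hβ
  have hfG : ∀ β : ℝ, β < βb → f β = -1 - 2 / G β := by
    intro β hβ
    rw [hf β (ne_of_lt (hgneg β hβ)), hgG β (hβ.trans hβb)]
  -- strict monotonicity of f
  have hfmono : StrictMonoOn f (Iio βb) := by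
    intro x hx y hy hxy
    simp only [Set.mem_Iio] at hx hy
    have hGx := hGneg x hx
    have hGy := hGneg y hy
    have hGxy := hmono x y hxy (hy.trans hβb)
    have hxy0 : 0 < G x * G y := mul_pos_of_neg_of_neg hGx hGy
    have key : ∀ u v : ℝ, u ≠ 0 → v ≠ 0 → 2 / u - 2 / v = 2 * (v - u) / (u * v) := by
      intro u v hu hv
      field_simp
    have hpos : 0 < 2 / G x - 2 / G y := by
      rw [key _ _ (ne_of_lt hGx) (ne_of_lt hGy)]
      exact div_pos (mul_pos two_pos (by linarith)) hxy0
    rw [hfG x hx, hfG y hy]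
    linarith
  -- f maps into the interval
  have hmaps : ∀ β : ℝ, β < βb → -1 + 2 / ((n : ℝ) - 1) < f β := by
    intro β hβ
    have hGβ := hGneg β hβ
    have hl := hlow β ((hβ.trans hβb))
    have h1 : 0 < -(G β) := by linarith
    have h2 : -(G β) < (n:ℝ) - 1 := by linarith
    have h3 : 2 / ((n:ℝ) - 1) < 2 / (-(G β)) :=
      div_lt_div_of_pos_left (by norm_num) h1 h2
    rw [div_neg] at h3
    rw [hfG β hβ]
    linarith
  -- continuity of G on (-∞, βb]
  have hcont : ContinuousOn G (Iic βb) := by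
    apply ContinuousOn.add continuousOn_const
    apply continuousOn_finset_sum
    intro j _
    apply ContinuousOn.div continuousOn_id (continuousOn_const.sub continuousOn_id)
    intro β hβ
    exact ne_of_gt (hden β (lt_of_le_of_lt hβ hβb) j)
  -- limit of G at -∞
  have htend : Tendsto G atBot (𝓝 ((1 : ℝ) - n)) := by
    have hterm : ∀ j : Fin n, Tendsto (fun β : ℝ => β / (μ j - β)) atBot (𝓝 (-1)) := by
      intro j
      have hdt : Tendsto (fun β : ℝ => μ j - β) atBot atTop := by
        have h := (tendsto_neg_atBot_atTop : Tendsto (fun x : ℝ => -x) atBot atTop)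
        simpa [sub_eq_add_neg] using tendsto_atTop_add_const_left atBot (μ j) h
      have h0 : Tendsto (fun β : ℝ => μ j / (μ j - β)) atBot (𝓝 0) :=
        Tendsto.div_atTop tendsto_const_nhds hdt
      have h1 : Tendsto (fun β : ℝ => -1 + μ j / (μ j - β)) atBot (𝓝 (-1)) := by
        simpa using tendsto_const_nhds.add h0
      apply h1.congr'
      filter_upwards [eventually_lt_atBot (μ j)] with β hβ
      have hd : μ j - β ≠ 0 := by linarith
      field_simp
      ring
    have hsum : Tendsto (fun β : ℝ => ∑ j, β / (μ j - β)) atBot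
        (𝓝 (∑ _j : Fin n, (-1 : ℝ))) := tendsto_finset_sum _ (fun j _ => hterm j)
    simp only [Finset.sum_const, card_univ, Fintype.card_fin, nsmul_eq_mul] at hsum
    have hfin := (tendsto_const_nhds (x := (1:ℝ)) (f := (atBot : Filter ℝ))).add hsum
    simp only [hGdef]
    convert hfin using 2
    push_cast
    ring
  -- surjectivity
  have hsurj : ∀ lam : ℝ, -1 + 2 / ((n : ℝ) - 1) < lam → ∃ β : ℝ, β < βb ∧ f β = lam := by
    intro lam hlam
    have hn1' : (0:ℝ) < (n:ℝ) - 1 := by linarith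
    have h1lam : 0 < 1 + lam := by
      have : 0 < 2 / ((n:ℝ) - 1) := by positivity
      linarith
    set t : ℝ := -(2 / (1 + lam)) with htdef
    have ht0 : t < 0 := by
      have : 0 < 2 / (1 + lam) := by positivity
      rw [htdef]; linarith
    have htlow : (1:ℝ) - n < t := by
      have h2 : 2 / ((n:ℝ) - 1) < 1 + lam := by linarith
      have h3 : 2 / (1 + lam) < (n:ℝ) - 1 := by
        rw [div_lt_iff₀ h1lam]
        rw [div_lt_iff₀ hn1'] at h2
        nlinarith
      simp only [htdef]
      linarith
    -- find a point a with G a < t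
    have hev : ∀ᶠ β in (atBot : Filter ℝ), G β < t :=
      htend.eventually_lt_const (by linarith : (1:ℝ) - n < t)
    obtain ⟨c, hc⟩ := eventually_atBot.mp hev
    set a : ℝ := min c (βb - 1) with hadef
    have haβ : a < βb := lt_of_le_of_lt (min_le_right _ _) (by linarith)
    have hGa : G a < t := hc a (min_le_left _ _)
    have hsub : Icc a βb ⊆ Iic βb := Icc_subset_Iic_self
    have htmem : t ∈ Icc (G a) (G βb) := by
      rw [hGβb]; exact ⟨le_of_lt hGa, le_of_lt ht0⟩
    obtain ⟨β, hβmem, hβt⟩ := intermediate_value_Icc (le_of_lt haβ) (hcont.mono hsub) htmem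
    have hβlt : β < βb := by
      rcases lt_or_eq_of_le hβmem.2 with h | h
      · exact h
      · exfalso; rw [h, hGβb] at hβt; linarith
    refine ⟨β, hβlt, ?_⟩
    rw [hfG β hβlt, hβt, htdef]
    have hne' : (1 + lam) ≠ 0 := ne_of_gt h1lam
    field_simp
    ring
  -- assemble
  have hBij : Set.BijOn f (Iio βb) (Ioi (-1 + 2 / ((n : ℝ) - 1))) := by
    refine ⟨fun β hβ => hmaps β hβ, hfmono.injOn, ?_⟩
    intro lam hlam
    obtain ⟨β, hβ, hfβ⟩ := hsurj lam hlam
    exact ⟨β, hβ, hfβ⟩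
  refine ⟨hgneg, hfmono, hBij, ?_, ?_⟩
  · intro lam hlam
    obtain ⟨β, hβ, hfβ⟩ := hsurj lam hlam
    refine ⟨β, ⟨hβ, hfβ⟩, ?_⟩
    rintro β' ⟨hβ', hfβ'⟩
    exact hfmono.injOn (Set.mem_Iio.mpr hβ') (Set.mem_Iio.mpr hβ)
      (hfβ'.trans hfβ.symm)
  · rintro lam hlam ⟨β, hβ, hfβ⟩
    have h := hmaps β hβ
    rw [hfβ] at h
    linarith
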